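/- arXiv:2509.21809 — 2 statements merged into one kernel-verified Lean document; each statement's English description precedes it below -/
import Mathlib

section
/- Let f : ℝ³ → ℝ be smooth with f > 0 everywhere, and consider the almost paracontact metric Walker structure with ξ₁ ≡ 0, ξ₂ ≡ 0, ξ₃ = 1/√f (so the constraint f ξ₃² = 1 holds, η = (1/√f)dx + √f dz, φ∂x = (1/√f)∂y, φ∂y = √f ∂x − (1/√f)∂z, φ∂z = 0, and Φ(∂x,∂y) = 1/√f, Φ(∂x,∂z) = Φ(∂y,∂z) = 0). Then: (a) the structure is almost α-paracosymplectic — i.e. dη(∂i,∂j) = 0 everywhere for all i,j and there exists a smooth nowhere-vanishing function α : ℝ³ → ℝ with dΦ(∂x,∂y,∂z) = 2α·(η∧Φ)(∂x,∂y,∂z) everywhere — if and only if f_y ≡ 0 and f_z = −f f_x with f_z vanishing nowhere; (b) there is no nonzero real constant α such that dη = 0 and dΦ = 2α η∧Φ hold everywhere (the structure is never almost α-para-Kenmotsu). (Theorem 4.3(ii).) -/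
open Real

/-- Points of the Walker manifold `M = ℝ³` with coordinates `(x,y,z)`. -/
abbrev Pt : Type := ℝ × ℝ × ℝ

/-- Vector fields on `ℝ³`, given by their components in the frame `∂x, ∂y, ∂z`. -/
abbrev VF : Type := Pt → Pt

/-- Partial derivative ∂/∂x. -/
noncomputable def pdx (F : Pt → ℝ) (p : Pt) : ℝ := fderiv ℝ F p ((1:ℝ), (0:ℝ), (0:ℝ))

/-- Partial derivative ∂/∂y. -/
noncomputable def pdy (F : Pt → ℝ) (p : Pt) : ℝ := fderiv ℝ F p ((0:ℝ), (1:ℝ), (0:ℝ))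

/-- Partial derivative ∂/∂z. -/
noncomputable def pdz (F : Pt → ℝ) (p : Pt) : ℝ := fderiv ℝ F p ((0:ℝ), (0:ℝ), (1:ℝ))

/-- Directional derivative of a scalar function along a vector field. -/
noncomputable def dd (X : VF) (F : Pt → ℝ) (p : Pt) : ℝ := fderiv ℝ F p (X p)

/-- Components of a tangent vector. -/
def c1 (v : Pt) : ℝ := v.1
def c2 (v : Pt) : ℝ := v.2.1
def c3 (v : Pt) : ℝ := v.2.2

/-- The coordinate vector fields `∂x, ∂y, ∂z`. -/
noncomputable def E : Fin 3 → VF :=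
  ![fun _ => ((1:ℝ), (0:ℝ), (0:ℝ)), fun _ => ((0:ℝ), (1:ℝ), (0:ℝ)),
    fun _ => ((0:ℝ), (0:ℝ), (1:ℝ))]

/-- The Walker metric with `ε = 1`: `g(∂x,∂z) = g(∂z,∂x) = 1`, `g(∂y,∂y) = 1`,
`g(∂z,∂z) = f`, all other components zero. -/
noncomputable def gm (f : Pt → ℝ) (X Y : VF) (p : Pt) : ℝ :=
  c1 (X p) * c3 (Y p) + c3 (X p) * c1 (Y p) + c2 (X p) * c2 (Y p)
    + f p * c3 (X p) * c3 (Y p)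

/-- The Levi-Civita connection of the Walker metric:
`∇_{∂x}∂z = ∇_{∂z}∂x = (1/2) f_x ∂x`, `∇_{∂y}∂z = ∇_{∂z}∂y = (1/2) f_y ∂x`,
`∇_{∂z}∂z = (1/2)(f f_x + f_z) ∂x - (1/2) f_y ∂y - (1/2) f_x ∂z`, all other covariant
derivatives of coordinate fields zero, extended by `C^∞`-linearity below and the
Leibniz rule above. -/
noncomputable def cov (f : Pt → ℝ) (X Y : VF) : VF := fun p =>
  ( dd X (fun q => c1 (Y q)) p
      + (1/2) * pdx f p * (c1 (X p) * c3 (Y p) + c3 (X p) * c1 (Y p))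
      + (1/2) * pdy f p * (c2 (X p) * c3 (Y p) + c3 (X p) * c2 (Y p))
      + (1/2) * (f p * pdx f p + pdz f p) * (c3 (X p) * c3 (Y p)),
    dd X (fun q => c2 (Y q)) p - (1/2) * pdy f p * (c3 (X p) * c3 (Y p)),
    dd X (fun q => c3 (Y q)) p - (1/2) * pdx f p * (c3 (X p) * c3 (Y p)) )

/-- Lie bracket of vector fields on `ℝ³`. -/
noncomputable def brk (X Y : VF) : VF := fun p =>
  ( dd X (fun q => c1 (Y q)) p - dd Y (fun q => c1 (X q)) p,
    dd X (fun q => c2 (Y q)) p - dd Y (fun q => c2 (X q)) p,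
    dd X (fun q => c3 (Y q)) p - dd Y (fun q => c3 (X q)) p )

/-- The `(1,1)`-tensor `φ` of the almost paracontact metric Walker structure:
`φ∂x = -ξ₂∂x + ξ₃∂y`, `φ∂y = (ξ₁ + fξ₃)∂x - ξ₃∂z`, `φ∂z = -fξ₂∂x - ξ₁∂y + ξ₂∂z`. -/
noncomputable def phiV (f ξ₁ ξ₂ ξ₃ : Pt → ℝ) (X : VF) : VF := fun p =>
  ( -ξ₂ p * c1 (X p) + (ξ₁ p + f p * ξ₃ p) * c2 (X p) - f p * ξ₂ p * c3 (X p),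
    ξ₃ p * c1 (X p) - ξ₁ p * c3 (X p),
    -ξ₃ p * c2 (X p) + ξ₂ p * c3 (X p) )

/-- The 1-form `η = ξ₃ dx + ξ₂ dy + (ξ₁ + fξ₃) dz`. -/
noncomputable def etaV (f ξ₁ ξ₂ ξ₃ : Pt → ℝ) (X : VF) (p : Pt) : ℝ :=
  ξ₃ p * c1 (X p) + ξ₂ p * c2 (X p) + (ξ₁ p + f p * ξ₃ p) * c3 (X p)

/-- The structure tensor `F(X,Y,Z) = g((∇_X φ)Y, Z)`, `(∇_X φ)Y = ∇_X(φY) - φ(∇_X Y)`. -/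
noncomputable def Ften (f ξ₁ ξ₂ ξ₃ : Pt → ℝ) (X Y Z : VF) (p : Pt) : ℝ :=
  gm f (fun q => cov f X (phiV f ξ₁ ξ₂ ξ₃ Y) q - phiV f ξ₁ ξ₂ ξ₃ (cov f X Y) q) Z p

/-- The fundamental 2-form `Φ(X,Y) = g(φX, Y)`. -/
noncomputable def Phi2 (f ξ₁ ξ₂ ξ₃ : Pt → ℝ) (X Y : VF) : Pt → ℝ :=
  gm f (phiV f ξ₁ ξ₂ ξ₃ X) Y

/-- `dη(∂i,∂j) = (1/2)(∂i(η(∂j)) - ∂j(η(∂i)))` on coordinate fields. -/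
noncomputable def deta (f ξ₁ ξ₂ ξ₃ : Pt → ℝ) (i j : Fin 3) (p : Pt) : ℝ :=
  (1/2) * (dd (E i) (etaV f ξ₁ ξ₂ ξ₃ (E j)) p - dd (E j) (etaV f ξ₁ ξ₂ ξ₃ (E i)) p)

/-- `dη(X,Y) = (1/2)(X(η(Y)) - Y(η(X)) - η([X,Y]))` on general vector fields. -/
noncomputable def detaB (f ξ₁ ξ₂ ξ₃ : Pt → ℝ) (X Y : VF) (p : Pt) : ℝ :=
  (1/2) * (dd X (etaV f ξ₁ ξ₂ ξ₃ Y) p - dd Y (etaV f ξ₁ ξ₂ ξ₃ X) p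
    - etaV f ξ₁ ξ₂ ξ₃ (brk X Y) p)

/-- The Nijenhuis tensor `N(X,Y) = φ²[X,Y] + [φX,φY] - φ[φX,Y] - φ[X,φY]`. -/
noncomputable def nij (f ξ₁ ξ₂ ξ₃ : Pt → ℝ) (X Y : VF) : VF := fun p =>
  phiV f ξ₁ ξ₂ ξ₃ (phiV f ξ₁ ξ₂ ξ₃ (brk X Y)) p
    + brk (phiV f ξ₁ ξ₂ ξ₃ X) (phiV f ξ₁ ξ₂ ξ₃ Y) p
    - phiV f ξ₁ ξ₂ ξ₃ (brk (phiV f ξ₁ ξ₂ ξ₃ X) Y) p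
    - phiV f ξ₁ ξ₂ ξ₃ (brk X (phiV f ξ₁ ξ₂ ξ₃ Y)) p

/-- The curvature tensor, with the paper's sign convention
`R(X,Y)Z = ∇_{[X,Y]}Z - ∇_X∇_Y Z + ∇_Y∇_X Z`. -/
noncomputable def Rop (f : Pt → ℝ) (X Y Z : VF) : VF := fun p =>
  cov f (brk X Y) Z p - cov f X (cov f Y Z) p + cov f Y (cov f X Z) p

/-- Second partial derivatives of `f`. -/
noncomputable def fxx (f : Pt → ℝ) : Pt → ℝ := pdx (pdx f)
noncomputable def fxy (f : Pt → ℝ) : Pt → ℝ := pdy (pdx f)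
noncomputable def fyy (f : Pt → ℝ) : Pt → ℝ := pdy (pdy f)

/-- The Ricci tensor of the Walker metric: `ρ(∂x,∂z) = ρ(∂z,∂x) = (1/2) f_xx`,
`ρ(∂y,∂z) = ρ(∂z,∂y) = (1/2) f_xy`, `ρ(∂z,∂z) = (1/2)(f f_xx - f_yy)`, all other
components zero, extended tensorially. -/
noncomputable def rhoT (f : Pt → ℝ) (X Y : VF) (p : Pt) : ℝ :=
  (1/2) * fxx f p * (c1 (X p) * c3 (Y p) + c3 (X p) * c1 (Y p))
    + (1/2) * fxy f p * (c2 (X p) * c3 (Y p) + c3 (X p) * c2 (Y p))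
    + (1/2) * (f p * fxx f p - fyy f p) * (c3 (X p) * c3 (Y p))

/-- The Ricci operator: `Q∂x = (1/2)f_xx ∂x`, `Q∂y = (1/2)f_xy ∂x`,
`Q∂z = -(1/2)f_yy ∂x + (1/2)f_xy ∂y + (1/2)f_xx ∂z`. -/
noncomputable def Qop (f : Pt → ℝ) (X : VF) : VF := fun p =>
  ( (1/2) * fxx f p * c1 (X p) + (1/2) * fxy f p * c2 (X p) - (1/2) * fyy f p * c3 (X p),
    (1/2) * fxy f p * c3 (X p),
    (1/2) * fxx f p * c3 (X p) )

/-- `dΦ(∂x,∂y,∂z) = ∂x(Φ(∂y,∂z)) - ∂y(Φ(∂x,∂z)) + ∂z(Φ(∂x,∂y))`. -/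
noncomputable def dPhi (f ξ₁ ξ₂ ξ₃ : Pt → ℝ) (p : Pt) : ℝ :=
  pdx (Phi2 f ξ₁ ξ₂ ξ₃ (E 1) (E 2)) p - pdy (Phi2 f ξ₁ ξ₂ ξ₃ (E 0) (E 2)) p
    + pdz (Phi2 f ξ₁ ξ₂ ξ₃ (E 0) (E 1)) p

/-- `(η∧Φ)(∂x,∂y,∂z) = η(∂x)Φ(∂y,∂z) - η(∂y)Φ(∂x,∂z) + η(∂z)Φ(∂x,∂y)`. -/
noncomputable def etaWedgePhi (f ξ₁ ξ₂ ξ₃ : Pt → ℝ) (p : Pt) : ℝ :=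
  etaV f ξ₁ ξ₂ ξ₃ (E 0) p * Phi2 f ξ₁ ξ₂ ξ₃ (E 1) (E 2) p
    - etaV f ξ₁ ξ₂ ξ₃ (E 1) p * Phi2 f ξ₁ ξ₂ ξ₃ (E 0) (E 2) p
    + etaV f ξ₁ ξ₂ ξ₃ (E 2) p * Phi2 f ξ₁ ξ₂ ξ₃ (E 0) (E 1) p

/-- The constant function `0`. -/
noncomputable def zeroF : Pt → ℝ := fun _ => 0
/-- The constant function `1`. -/
noncomputable def oneF : Pt → ℝ := fun _ => 1
/-- The constant function `-1`. -/
noncomputable def negOneF : Pt → ℝ := fun _ => -1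

/-- The coordinate `ξ₃ = 1/√f` of the structure of Theorem 4.3. -/
noncomputable def xi3s (f : Pt → ℝ) : Pt → ℝ := fun p => 1 / Real.sqrt (f p)

/-! ### Auxiliary lemmas -/

section AuxLemmas
variable {f : Pt → ℝ} {p : Pt}

lemma hasFDerivAt_xi3s' (h0 : 0 < f p) (hfd : DifferentiableAt ℝ f p) :
    HasFDerivAt (xi3s f)
      ((-(1 / (2 * Real.sqrt (f p))) / (Real.sqrt (f p)) ^ 2) • fderiv ℝ f p) p := by
  have hs : Real.sqrt (f p) ≠ 0 := by positivity
  have hg : HasDerivAt (fun y => (Real.sqrt y)⁻¹)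
      (-(1 / (2 * Real.sqrt (f p))) / (Real.sqrt (f p)) ^ 2) (f p) :=
    (Real.hasDerivAt_sqrt h0.ne').inv hs
  have h2 := hg.comp_hasFDerivAt p hfd.hasFDerivAt
  have hxe : xi3s f = (fun y => (Real.sqrt y)⁻¹) ∘ f := by
    funext q; simp [xi3s, one_div, Function.comp]
  rw [hxe]; exact h2

lemma fderiv_xi3s' (h0 : 0 < f p) (hfd : DifferentiableAt ℝ f p) (v : Pt) :
    fderiv ℝ (xi3s f) p v = -(fderiv ℝ f p v) / (2 * f p * Real.sqrt (f p)) := by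
  have hs : (0:ℝ) < Real.sqrt (f p) := Real.sqrt_pos.mpr h0
  have hsq : Real.sqrt (f p) ^ 2 = f p := Real.sq_sqrt h0.le
  rw [(hasFDerivAt_xi3s' h0 hfd).fderiv]
  simp only [ContinuousLinearMap.smul_apply, smul_eq_mul]
  rw [← hsq]; field_simp; rw [Real.sqrt_sq hs.le]

lemma fderiv_sqrtf' (h0 : 0 < f p) (hfd : DifferentiableAt ℝ f p) (v : Pt) :
    fderiv ℝ (fun q => Real.sqrt (f q)) p v = (fderiv ℝ f p v) / (2 * Real.sqrt (f p)) := by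
  rw [(hfd.hasFDerivAt.sqrt h0.ne').fderiv]
  simp only [ContinuousLinearMap.smul_apply, smul_eq_mul]; ring

lemma etaE0_eq (f : Pt → ℝ) : etaV f zeroF zeroF (xi3s f) (E 0) = xi3s f := by
  funext q; simp [etaV, zeroF, E, c1, c2, c3]

lemma etaE1_eq (f : Pt → ℝ) : etaV f zeroF zeroF (xi3s f) (E 1) = fun _ => (0:ℝ) := by
  funext q; simp [etaV, zeroF, E, c1, c2, c3]

lemma etaE2_eq (f : Pt → ℝ) :
    etaV f zeroF zeroF (xi3s f) (E 2) = fun q => Real.sqrt (f q) := by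
  funext q
  simp [etaV, zeroF, E, c1, c2, c3, xi3s]
  rw [← div_eq_mul_inv]
  exact Real.div_sqrt

lemma Phi12_eq (f : Pt → ℝ) : Phi2 f zeroF zeroF (xi3s f) (E 1) (E 2) = fun _ => (0:ℝ) := by
  funext q; simp [Phi2, gm, phiV, zeroF, E, c1, c2, c3]

lemma Phi02_eq (f : Pt → ℝ) : Phi2 f zeroF zeroF (xi3s f) (E 0) (E 2) = fun _ => (0:ℝ) := by
  funext q; simp [Phi2, gm, phiV, zeroF, E, c1, c2, c3]

lemma Phi01_eq (f : Pt → ℝ) : Phi2 f zeroF zeroF (xi3s f) (E 0) (E 1) = xi3s f := by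
  funext q; simp [Phi2, gm, phiV, zeroF, E, c1, c2, c3, xi3s]

lemma dPhi_eq (f : Pt → ℝ) (h0 : 0 < f p) (hfd : DifferentiableAt ℝ f p) :
    dPhi f zeroF zeroF (xi3s f) p = -(pdz f p) / (2 * f p * Real.sqrt (f p)) := by
  rw [dPhi, Phi12_eq, Phi02_eq, Phi01_eq]
  simp [pdx, pdy, pdz]
  exact fderiv_xi3s' h0 hfd _

lemma etaWedgePhi_eq (f : Pt → ℝ) (h0 : 0 < f p) :
    etaWedgePhi f zeroF zeroF (xi3s f) p = 1 := by
  have hs : Real.sqrt (f p) ≠ 0 := by positivity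
  rw [etaWedgePhi, Phi12_eq, Phi02_eq, Phi01_eq, etaE0_eq, etaE1_eq, etaE2_eq f]
  simp [xi3s]
  exact mul_inv_cancel₀ hs

lemma deta01 (h0 : 0 < f p) (hfd : DifferentiableAt ℝ f p) :
    deta f zeroF zeroF (xi3s f) 0 1 p = pdy f p / (4 * f p * Real.sqrt (f p)) := by
  simp only [deta, dd, etaE0_eq f, etaE1_eq f]
  simp only [E, Matrix.cons_val_zero, Matrix.cons_val_one, Matrix.head_cons]
  rw [fderiv_fun_const]
  simp only [Pi.zero_apply, ContinuousLinearMap.zero_apply,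
    fderiv_xi3s' h0 hfd, pdy]
  ring

lemma deta02 (h0 : 0 < f p) (hfd : DifferentiableAt ℝ f p) :
    deta f zeroF zeroF (xi3s f) 0 2 p
      = (f p * pdx f p + pdz f p) / (4 * f p * Real.sqrt (f p)) := by
  have hs : (0:ℝ) < Real.sqrt (f p) := Real.sqrt_pos.mpr h0
  have hsq : Real.sqrt (f p) * Real.sqrt (f p) = f p := Real.mul_self_sqrt h0.le
  simp only [deta, dd, etaE0_eq f, etaE2_eq f]
  simp only [E, Matrix.cons_val_zero, Matrix.cons_val_one, Matrix.head_cons,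
    Matrix.cons_val_two, Matrix.tail_cons]
  rw [fderiv_sqrtf' h0 hfd, fderiv_xi3s' h0 hfd]
  simp only [pdx, pdz]
  field_simp
  ring_nf

lemma deta12 (h0 : 0 < f p) (hfd : DifferentiableAt ℝ f p) :
    deta f zeroF zeroF (xi3s f) 1 2 p = pdy f p / (4 * Real.sqrt (f p)) := by
  simp only [deta, dd, etaE1_eq f, etaE2_eq f]
  simp only [E, Matrix.cons_val_zero, Matrix.cons_val_one, Matrix.head_cons,
    Matrix.cons_val_two, Matrix.tail_cons]
  rw [fderiv_sqrtf' h0 hfd, fderiv_fun_const]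
  simp only [Pi.zero_apply, ContinuousLinearMap.zero_apply, pdy]
  ring

lemma deta_anti (ξ₁ ξ₂ ξ₃ : Pt → ℝ) (i j : Fin 3) :
    deta f ξ₁ ξ₂ ξ₃ i j p = - deta f ξ₁ ξ₂ ξ₃ j i p := by
  simp only [deta]; ring

end AuxLemmas
/-- Theorem 4.3(ii): the structure with `ξ₁ = ξ₂ = 0`, `ξ₃ = 1/√f` is almost
`α`-paracosymplectic iff `f_y ≡ 0` and `f_z = -f f_x` with `f_z` vanishing nowhere;
and it is never almost `α`-para-Kenmotsu. -/
theorem almost_alpha_paracosymplectic_iff (f : Pt → ℝ)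
    (hf : ContDiff ℝ (⊤ : ℕ∞) f) (hfpos : ∀ p : Pt, 0 < f p) :
    (((∀ (i j : Fin 3) (p : Pt), deta f zeroF zeroF (xi3s f) i j p = 0) ∧
        ∃ α : Pt → ℝ, ContDiff ℝ (⊤ : ℕ∞) α ∧ (∀ p : Pt, α p ≠ 0) ∧
          ∀ p : Pt, dPhi f zeroF zeroF (xi3s f) p =
            2 * α p * etaWedgePhi f zeroF zeroF (xi3s f) p) ↔
      ((∀ p : Pt, pdy f p = 0) ∧ (∀ p : Pt, pdz f p = -(f p * pdx f p)) ∧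
        (∀ p : Pt, pdz f p ≠ 0))) ∧
    ¬ ∃ α : ℝ, α ≠ 0 ∧
        (∀ (i j : Fin 3) (p : Pt), deta f zeroF zeroF (xi3s f) i j p = 0) ∧
        ∀ p : Pt, dPhi f zeroF zeroF (xi3s f) p =
          2 * α * etaWedgePhi f zeroF zeroF (xi3s f) p := by
  have hfd : Differentiable ℝ f := hf.differentiable (by simp)
  have hspos : ∀ p : Pt, (0:ℝ) < Real.sqrt (f p) := fun p => Real.sqrt_pos.mpr (hfpos p)
  have hden : ∀ p : Pt, (4:ℝ) * f p * Real.sqrt (f p) ≠ 0 := by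
    intro p
    have h1 := hfpos p
    have h2 := Real.sqrt_pos.mpr h1
    positivity
  -- the key identity: dPhi = -f_z/(2 f √f) and η∧Φ = 1
  have hdPhi : ∀ p : Pt, dPhi f zeroF zeroF (xi3s f) p
      = -(pdz f p) / (2 * f p * Real.sqrt (f p)) :=
    fun p => dPhi_eq f (hfpos p) (hfd p)
  have hwedge : ∀ p : Pt, etaWedgePhi f zeroF zeroF (xi3s f) p = 1 :=
    fun p => etaWedgePhi_eq f (hfpos p)
  constructor
  · constructor
    · rintro ⟨hdeta, α, hαs, hα0, hαeq⟩
      have hy : ∀ p : Pt, pdy f p = 0 := by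
        intro p
        have h := hdeta 0 1 p
        rw [deta01 (hfpos p) (hfd p)] at h
        rcases div_eq_zero_iff.mp h with h' | h'
        · exact h'
        · exact absurd h' (hden p)
      have hz : ∀ p : Pt, pdz f p = -(f p * pdx f p) := by
        intro p
        have h := hdeta 0 2 p
        rw [deta02 (hfpos p) (hfd p)] at h
        rcases div_eq_zero_iff.mp h with h' | h'
        · linarith
        · exact absurd h' (hden p)
      refine ⟨hy, hz, fun p hzz => ?_⟩
      have h := hαeq p
      rw [hdPhi p, hwedge p, hzz] at h
      apply hα0 p
      have h2 : (0:ℝ) = 2 * α p := by simpa using h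
      linarith
    · rintro ⟨hy, hz, hz0⟩
      constructor
      · intro i j p
        have h01 : deta f zeroF zeroF (xi3s f) 0 1 p = 0 := by
          rw [deta01 (hfpos p) (hfd p), hy p, zero_div]
        have h02 : deta f zeroF zeroF (xi3s f) 0 2 p = 0 := by
          rw [deta02 (hfpos p) (hfd p), hz p]
          simp
        have h12 : deta f zeroF zeroF (xi3s f) 1 2 p = 0 := by
          rw [deta12 (hfpos p) (hfd p), hy p, zero_div]
        fin_cases i <;> fin_cases j <;>
          simp_all [deta_anti zeroF zeroF (xi3s f) 1 0,
            deta_anti zeroF zeroF (xi3s f) 2 0, deta_anti zeroF zeroF (xi3s f) 2 1] <;>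
          simp [deta]
      · refine ⟨fun p => -(pdz f p) / (4 * f p * Real.sqrt (f p)), ?_, ?_, ?_⟩
        · -- smoothness of α
          have hdz : ContDiff ℝ (⊤ : ℕ∞) (pdz f) := by
            have h1 : ContDiff ℝ (⊤ : ℕ∞) (fun p => fderiv ℝ f p) :=
              hf.fderiv_right (by exact_mod_cast le_top)
            exact h1.clm_apply contDiff_const
          have hsf : ContDiff ℝ (⊤ : ℕ∞) (fun p => Real.sqrt (f p)) := by
            rw [contDiff_iff_contDiffAt]
            intro p
            exact (Real.contDiffAt_sqrt (hfpos p).ne').comp p hf.contDiffAt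
          exact hdz.neg.div ((contDiff_const.mul hf).mul hsf)
            (fun p => hden p)
        · intro p
          exact div_ne_zero (neg_ne_zero.mpr (hz0 p)) (hden p)
        · intro p
          rw [hdPhi p, hwedge p]
          have hs := (hspos p).ne'
          have hfp := (hfpos p).ne'
          field_simp
          ring
  · rintro ⟨α, hα, -, heq⟩
    -- along the z-axis, t ↦ 1/√f(0,0,t) has constant derivative 2α
    set h : ℝ → ℝ := fun t => xi3s f ((0:ℝ), (0:ℝ), t) with hh
    have hD : ∀ t : ℝ, HasDerivAt h (2 * α) t := by
      intro t
      set p : Pt := ((0:ℝ), (0:ℝ), t) with hp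
      have hL : HasDerivAt (fun s : ℝ => (((0:ℝ), (0:ℝ), s) : Pt))
          ((0:ℝ), (0:ℝ), (1:ℝ)) t :=
        (hasDerivAt_const t (0:ℝ)).prodMk ((hasDerivAt_const t (0:ℝ)).prodMk (hasDerivAt_id t))
      have hX := hasFDerivAt_xi3s' (hfpos p) (hfd p)
      have hcomp := hX.comp_hasDerivAt t hL
      have hval : fderiv ℝ (xi3s f) p ((0:ℝ), (0:ℝ), (1:ℝ)) = 2 * α := by
        rw [fderiv_xi3s' (hfpos p) (hfd p)]
        have := heq p
        rw [hdPhi p, hwedge p] at this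
        rw [show fderiv ℝ f p ((0:ℝ), (0:ℝ), (1:ℝ)) = pdz f p from rfl]
        linarith [this]
      have hval2 : ((-(1 / (2 * Real.sqrt (f p))) / (Real.sqrt (f p)) ^ 2) •
          fderiv ℝ f p) ((0:ℝ), (0:ℝ), (1:ℝ)) = 2 * α := by
        rw [← hX.fderiv]; exact hval
      rw [hval2] at hcomp
      exact hcomp
    have hF : ∀ t : ℝ, HasDerivAt (fun s => h s - 2 * α * s) 0 t := by
      intro t
      have := (hD t).sub (((hasDerivAt_id t).const_mul (2 * α)))
      rw [mul_one, sub_self] at this; exact this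
    have hconst : ∀ t : ℝ, h t - 2 * α * t = h 0 - 2 * α * 0 := by
      intro t
      exact is_const_of_deriv_eq_zero (fun s => (hF s).differentiableAt)
        (fun s => (hF s).deriv) t 0
    have hpos : ∀ t : ℝ, 0 < h t := by
      intro t
      have := hspos ((0:ℝ), (0:ℝ), t)
      simp only [hh, xi3s]
      positivity
    set t₀ : ℝ := -(h 0) / (2 * α) with ht₀
    have h2α : (2:ℝ) * α ≠ 0 := by
      simp [hα]
    have hmul : 2 * α * t₀ = -(h 0) := by
      rw [ht₀]
      field_simp
    have hc := hconst t₀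
    have : h t₀ = 0 := by linarith
    linarith [hpos t₀]
end

section
/- Consider the almost paracontact metric Walker structure on ℝ³ with ξ₂ ≡ −1, ξ₃ ≡ 0 and an arbitrary smooth function ξ₁ : ℝ³ → ℝ (so ξ = ξ₁∂x − ∂y, η = −dy + ξ₁ dz, φ∂x = ∂x, φ∂y = ξ₁∂x, φ∂z = f∂x − ξ₁∂y − ∂z). Then the structure lies strictly in the basic class G₁₂ — i.e. F is nonzero at every point and F(X,Y,Z) = η(X)(η(Y)F(ξ,ξ,Z) − η(Z)F(ξ,ξ,Y)) for all vector fields X,Y,Z — if and only if (ξ₁)_x ≡ 0, (ξ₁)_y vanishes nowhere, and 2ξ₁(ξ₁)_y + 2(ξ₁)_z + ξ₁ f_x − f_y ≡ 0 on ℝ³ (Theorem 4.5(v)). -/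
open Real

/-- The Reeb vector field `ξ = ξ₁∂x - ∂y`. -/
noncomputable def xiVm (ξ₁ : Pt → ℝ) : VF := fun p => (ξ₁ p, (-1:ℝ), (0:ℝ))

lemma fderiv_pt_eval (F : Pt → ℝ) (p : Pt) (u v w : ℝ) :
    fderiv ℝ F p ((u,v,w) : Pt) = u * pdx F p + v * pdy F p + w * pdz F p := by
  have h : ((u,v,w) : Pt) = u • (((1:ℝ),(0:ℝ),(0:ℝ)) : Pt) + v • (((0:ℝ),(1:ℝ),(0:ℝ)) : Pt)
      + w • (((0:ℝ),(0:ℝ),(1:ℝ)) : Pt) := by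
    simp [Prod.ext_iff]
  rw [h, map_add, map_add, map_smul, map_smul, map_smul]
  simp [pdx, pdy, pdz, smul_eq_mul]

lemma dd_eval (X : VF) (F : Pt → ℝ) (p : Pt) :
    dd X F p = (X p).1 * pdx F p + (X p).2.1 * pdy F p + (X p).2.2 * pdz F p := by
  have h : X p = ((X p).1, (X p).2.1, (X p).2.2) := rfl
  rw [dd, h, fderiv_pt_eval]

lemma dd_mul (X : VF) (G H : Pt → ℝ) (p : Pt) (hG : DifferentiableAt ℝ G p)
    (hH : DifferentiableAt ℝ H p) :
    dd X (fun q => G q * H q) p = dd X G p * H p + G p * dd X H p := by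
  unfold dd
  rw [fderiv_fun_mul hG hH]
  simp only [ContinuousLinearMap.add_apply, ContinuousLinearMap.smul_apply, smul_eq_mul]
  ring

lemma dd_add (X : VF) (G H : Pt → ℝ) (p : Pt) (hG : DifferentiableAt ℝ G p)
    (hH : DifferentiableAt ℝ H p) :
    dd X (fun q => G q + H q) p = dd X G p + dd X H p := by
  unfold dd
  rw [fderiv_fun_add hG hH]
  simp

lemma dd_neg (X : VF) (G : Pt → ℝ) (p : Pt) :
    dd X (fun q => -(G q)) p = -(dd X G p) := by
  unfold dd
  rw [fderiv_fun_neg]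
  simp

lemma Ften_eq (f ξ₁ : Pt → ℝ) (hf : ContDiff ℝ (⊤:ℕ∞) f) (h1 : ContDiff ℝ (⊤:ℕ∞) ξ₁)
    (X Y Z : VF) (hY : ContDiff ℝ (⊤:ℕ∞) Y) (p : Pt) :
    Ften f ξ₁ negOneF zeroF X Y Z p =
      ((X p).1 * pdx ξ₁ p + (X p).2.1 * pdy ξ₁ p
        + (X p).2.2 * (pdz ξ₁ p + (ξ₁ p * pdx f p - pdy f p)/2))
      * ((Y p).2.1 * (Z p).2.2 - (Y p).2.2 * (Z p).2.1) := by
  have hfd : DifferentiableAt ℝ f p := (hf.differentiable (by simp)) p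
  have had : DifferentiableAt ℝ ξ₁ p := (h1.differentiable (by simp)) p
  have hYd : DifferentiableAt ℝ Y p := (hY.differentiable (by simp)) p
  have hY1 : DifferentiableAt ℝ (fun q => (Y q).1) p := hYd.fst
  have hY2 : DifferentiableAt ℝ (fun q => (Y q).2.1) p := hYd.snd.fst
  have hY3 : DifferentiableAt ℝ (fun q => (Y q).2.2) p := hYd.snd.snd
  have hc1 : (fun q => c1 (phiV f ξ₁ negOneF zeroF Y q))
      = fun q => ((Y q).1 + ξ₁ q * (Y q).2.1) + f q * (Y q).2.2 := by
    funext q; simp [phiV, negOneF, zeroF, c1, c2, c3]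
  have hc2 : (fun q => c2 (phiV f ξ₁ negOneF zeroF Y q))
      = fun q => -(ξ₁ q * (Y q).2.2) := by
    funext q; simp [phiV, negOneF, zeroF, c1, c2, c3]
  have hc3 : (fun q => c3 (phiV f ξ₁ negOneF zeroF Y q))
      = fun q => -((Y q).2.2) := by
    funext q; simp [phiV, negOneF, zeroF, c1, c2, c3]
  have E1 : dd X (fun q => c1 (phiV f ξ₁ negOneF zeroF Y q)) p
      = (dd X (fun q => (Y q).1) p
          + (dd X ξ₁ p * (Y p).2.1 + ξ₁ p * dd X (fun q => (Y q).2.1) p))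
        + (dd X f p * (Y p).2.2 + f p * dd X (fun q => (Y q).2.2) p) := by
    rw [hc1,
      dd_add X (fun q => (Y q).1 + ξ₁ q * (Y q).2.1) (fun q => f q * (Y q).2.2) p
        (hY1.add (had.mul hY2)) (hfd.mul hY3),
      dd_add X (fun q => (Y q).1) (fun q => ξ₁ q * (Y q).2.1) p hY1 (had.mul hY2),
      dd_mul X ξ₁ (fun q => (Y q).2.1) p had hY2,
      dd_mul X f (fun q => (Y q).2.2) p hfd hY3]
  have E2 : dd X (fun q => c2 (phiV f ξ₁ negOneF zeroF Y q)) p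
      = -(dd X ξ₁ p * (Y p).2.2 + ξ₁ p * dd X (fun q => (Y q).2.2) p) := by
    rw [hc2, dd_neg X (fun q => ξ₁ q * (Y q).2.2) p,
      dd_mul X ξ₁ (fun q => (Y q).2.2) p had hY3]
  have E3 : dd X (fun q => c3 (phiV f ξ₁ negOneF zeroF Y q)) p
      = -(dd X (fun q => (Y q).2.2) p) := by
    rw [hc3, dd_neg X (fun q => (Y q).2.2) p]
  simp only [Ften, gm, cov]
  rw [E1, E2, E3]
  rw [dd_eval X ξ₁ p, dd_eval X f p]
  simp only [phiV, cov, negOneF, zeroF, c1, c2, c3, Prod.fst_sub, Prod.snd_sub]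
  ring
lemma hE_smooth (i : Fin 3) : ContDiff ℝ (⊤:ℕ∞) (E i) := by
  fin_cases i <;> · simp only [E, Matrix.cons_val_zero, Matrix.cons_val_one, Matrix.head_cons,
    Matrix.cons_val_two, Matrix.tail_cons]; exact contDiff_const

lemma xiVm_smooth (ξ₁ : Pt → ℝ) (h1 : ContDiff ℝ (⊤:ℕ∞) ξ₁) :
    ContDiff ℝ (⊤:ℕ∞) (xiVm ξ₁) := by
  unfold xiVm
  exact h1.prodMk contDiff_const

/-- Theorem 4.5(v): the structure with `ξ₂ ≡ -1`, `ξ₃ ≡ 0` lies strictly in the class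
`G₁₂` iff `(ξ₁)_x ≡ 0`, `(ξ₁)_y` vanishes nowhere and
`2ξ₁(ξ₁)_y + 2(ξ₁)_z + ξ₁ f_x - f_y ≡ 0`. -/
theorem G12_iff_neg (f ξ₁ : Pt → ℝ)
    (hf : ContDiff ℝ (⊤ : ℕ∞) f) (h1 : ContDiff ℝ (⊤ : ℕ∞) ξ₁) :
    ((∀ p : Pt, ∃ i j k : Fin 3, Ften f ξ₁ negOneF zeroF (E i) (E j) (E k) p ≠ 0) ∧
      (∀ X Y Z : VF, ContDiff ℝ (⊤ : ℕ∞) X → ContDiff ℝ (⊤ : ℕ∞) Y →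
        ContDiff ℝ (⊤ : ℕ∞) Z → ∀ p : Pt,
          Ften f ξ₁ negOneF zeroF X Y Z p =
            etaV f ξ₁ negOneF zeroF X p *
              (etaV f ξ₁ negOneF zeroF Y p *
                  Ften f ξ₁ negOneF zeroF (xiVm ξ₁) (xiVm ξ₁) Z p -
                etaV f ξ₁ negOneF zeroF Z p *
                  Ften f ξ₁ negOneF zeroF (xiVm ξ₁) (xiVm ξ₁) Y p))) ↔
    ((∀ p : Pt, pdx ξ₁ p = 0) ∧ (∀ p : Pt, pdy ξ₁ p ≠ 0) ∧
      (∀ p : Pt, 2 * ξ₁ p * pdy ξ₁ p + 2 * pdz ξ₁ p + ξ₁ p * pdx f p - pdy f p = 0)) := by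
  have hxiS := xiVm_smooth ξ₁ h1
  constructor
  · rintro ⟨hnz, hid⟩
    have hax : ∀ p : Pt, pdx ξ₁ p = 0 := by
      intro p
      have h := hid (E 0) (E 1) (E 2) (hE_smooth 0) (hE_smooth 1) (hE_smooth 2) p
      rw [Ften_eq f ξ₁ hf h1 _ _ _ (hE_smooth 1) p,
        Ften_eq f ξ₁ hf h1 _ _ _ hxiS p, Ften_eq f ξ₁ hf h1 _ _ _ hxiS p] at h
      simp [etaV, E, xiVm, zeroF, negOneF, c1, c2, c3] at h
      linarith
    have hcond : ∀ p : Pt,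
        2 * ξ₁ p * pdy ξ₁ p + 2 * pdz ξ₁ p + ξ₁ p * pdx f p - pdy f p = 0 := by
      intro p
      have h := hid (E 2) (E 1) (E 2) (hE_smooth 2) (hE_smooth 1) (hE_smooth 2) p
      rw [Ften_eq f ξ₁ hf h1 _ _ _ (hE_smooth 1) p,
        Ften_eq f ξ₁ hf h1 _ _ _ hxiS p, Ften_eq f ξ₁ hf h1 _ _ _ hxiS p] at h
      simp [etaV, E, xiVm, zeroF, negOneF, c1, c2, c3] at h
      rw [hax p] at h
      nlinarith [h]
    refine ⟨hax, ?_, hcond⟩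
    intro p hay0
    obtain ⟨i, j, k, hne⟩ := hnz p
    apply hne
    rw [Ften_eq f ξ₁ hf h1 _ _ _ (hE_smooth j) p]
    have hz : pdz ξ₁ p + (ξ₁ p * pdx f p - pdy f p)/2 = 0 := by
      have hc := hcond p
      rw [hay0] at hc
      linarith
    rw [hax p, hay0, hz]
    ring
  · rintro ⟨hax, hay, hcond⟩
    constructor
    · intro p
      refine ⟨1, 1, 2, ?_⟩
      rw [Ften_eq f ξ₁ hf h1 _ _ _ (hE_smooth 1) p]
      simp [E]
      exact hay p
    · intro X Y Z hX hYs hZ p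
      rw [Ften_eq f ξ₁ hf h1 X Y Z hYs p,
        Ften_eq f ξ₁ hf h1 _ _ Z hxiS p, Ften_eq f ξ₁ hf h1 _ _ Y hxiS p]
      have haz : pdz ξ₁ p = (pdy f p - ξ₁ p * pdx f p)/2 - ξ₁ p * pdy ξ₁ p := by
        have := hcond p; linarith
      rw [hax p, haz]
      simp only [etaV, xiVm, negOneF, zeroF, c1, c2, c3]
      ring
end
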